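/- For all i ∈ {1,2,4} and all j ∈ {1,2,3,4} with i ≠ j, the class Image_i is not a subclass of Image_j, i.e. there exists a CAF in Image_i that is not in Image_j. -/

import Mathlib

/-- A claim-augmented argumentation framework (CAF): a finite set of arguments,
an attack relation between the arguments, and a claim function assigning
a claim to each argument.  Arguments and claims are drawn from `ℕ`. -/
structure CAF where
  args : Finset ℕ
  att : Set (ℕ × ℕ)
  claim : ℕ → ℕ
  att_dom : ∀ p ∈ att, p.1 ∈ args ∧ p.2 ∈ args

namespace CAF

/-- A CAF is well-formed if arguments with the same claim attack the same arguments. -/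
def wf (F : CAF) : Prop :=
  ∀ a ∈ F.args, ∀ b ∈ F.args, F.claim a = F.claim b →
    ∀ c, ((a, c) ∈ F.att ↔ (b, c) ∈ F.att)

/-- `S` attacks the argument `b` in `F`. -/
def attacks (F : CAF) (S : Set ℕ) (b : ℕ) : Prop := ∃ a ∈ S, (a, b) ∈ F.att

/-- The argument `a` is defended by `S` in `F`. -/
def defends (F : CAF) (S : Set ℕ) (a : ℕ) : Prop :=
  ∀ b, (b, a) ∈ F.att → F.attacks S b

/-- The range `S⊕` of `S` in `F`. -/
def range (F : CAF) (S : Set ℕ) : Set ℕ := S ∪ {b | F.attacks S b}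

/-- Conflict-free sets. -/
def cf (F : CAF) (S : Set ℕ) : Prop :=
  S ⊆ ↑F.args ∧ ∀ a ∈ S, ∀ b ∈ S, (a, b) ∉ F.att

/-- Admissible sets. -/
def adm (F : CAF) (S : Set ℕ) : Prop :=
  F.cf S ∧ ∀ a ∈ S, F.defends S a

/-- Complete extensions. -/
def com (F : CAF) (S : Set ℕ) : Prop :=
  F.adm S ∧ ∀ a ∈ F.args, F.defends S a → a ∈ S

/-- Naive extensions: ⊆-maximal conflict-free sets. -/
def naive (F : CAF) (S : Set ℕ) : Prop :=
  F.cf S ∧ ¬ ∃ T, F.cf T ∧ S ⊂ T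

/-- Stable extensions. -/
def stb (F : CAF) (S : Set ℕ) : Prop :=
  F.cf S ∧ ∀ a ∈ F.args, a ∉ S → F.attacks S a

/-- Preferred extensions: ⊆-maximal admissible sets. -/
def prf (F : CAF) (S : Set ℕ) : Prop :=
  F.adm S ∧ ¬ ∃ T, F.adm T ∧ S ⊂ T

/-- Semi-stable extensions: admissible sets with ⊆-maximal range among admissible sets. -/
def sem (F : CAF) (S : Set ℕ) : Prop :=
  F.adm S ∧ ¬ ∃ T, F.adm T ∧ F.range S ⊂ F.range T

/-- Stage extensions: conflict-free sets with ⊆-maximal range among conflict-free sets. -/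
def stg (F : CAF) (S : Set ℕ) : Prop :=
  F.cf S ∧ ¬ ∃ T, F.cf T ∧ F.range S ⊂ F.range T

/-- The claim-based variant `σ_c` of a semantics `σ`. -/
def claimSem (σ : CAF → Set ℕ → Prop) (F : CAF) : Set (Set ℕ) :=
  {C | ∃ S, σ F S ∧ F.claim '' S = C}

/-- The wf-problematic part of a CAF: the pairs of arguments `(a,b)` such that
`(a,b)` is not an attack but some argument `a'` with the same claim as `a` attacks `b`. -/
def wfp (F : CAF) : Set (ℕ × ℕ) :=
  {p | p.1 ∈ F.args ∧ p.2 ∈ F.args ∧ p ∉ F.att ∧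
       ∃ a' ∈ F.args, F.claim a' = F.claim p.1 ∧ (a', p.2) ∈ F.att}

end CAF

/-- A preference-based CAF (PCAF): a well-formed CAF together with an
asymmetric preference relation over its arguments. -/
structure PCAF extends CAF where
  pref : ℕ → ℕ → Prop
  pref_dom : ∀ a b, pref a b → a ∈ args ∧ b ∈ args
  pref_asymm : ∀ a b, pref a b → ¬ pref b a
  isWf : toCAF.wf

/-- The attack relation obtained from a PCAF by Reduction `i` (`i ∈ {1,2,3,4}`). -/
def redAtt (i : ℕ) (F : PCAF) : Set (ℕ × ℕ) :=
  if i = 1 then {p | p ∈ F.att ∧ ¬ F.pref p.2 p.1}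
  else if i = 2 then
    {p | (p ∈ F.att ∧ ¬ F.pref p.2 p.1) ∨
         ((p.2, p.1) ∈ F.att ∧ p ∉ F.att ∧ F.pref p.1 p.2)}
  else if i = 3 then
    {p | (p ∈ F.att ∧ ¬ F.pref p.2 p.1) ∨ (p ∈ F.att ∧ (p.2, p.1) ∉ F.att)}
  else if i = 4 then
    {p | (p ∈ F.att ∧ ¬ F.pref p.2 p.1) ∨
         ((p.2, p.1) ∈ F.att ∧ p ∉ F.att ∧ F.pref p.1 p.2) ∨
         (p ∈ F.att ∧ (p.2, p.1) ∉ F.att)}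
  else ∅

/-- The CAF `Red_i(F)` obtained from the PCAF `F` by Reduction `i`. -/
def Red (i : ℕ) (F : PCAF) : CAF where
  args := F.args
  att := redAtt i F
  claim := F.claim
  att_dom := by
    intro p hp
    unfold redAtt at hp
    split_ifs at hp
    · simp only [Set.mem_setOf_eq] at hp
      exact F.att_dom p hp.1
    · simp only [Set.mem_setOf_eq] at hp
      rcases hp with ⟨h, -⟩ | ⟨h, -, -⟩
      · exact F.att_dom p h
      · exact ⟨(F.att_dom _ h).2, (F.att_dom _ h).1⟩
    · simp only [Set.mem_setOf_eq] at hp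
      rcases hp with ⟨h, -⟩ | ⟨h, -⟩ <;> exact F.att_dom p h
    · simp only [Set.mem_setOf_eq] at hp
      rcases hp with ⟨h, -⟩ | ⟨h, -, -⟩ | ⟨h, -⟩
      · exact F.att_dom p h
      · exact ⟨(F.att_dom _ h).2, (F.att_dom _ h).1⟩
      · exact F.att_dom p h
    · exact absurd hp (Set.notMem_empty p)

/-- `Image_i`: the class of CAFs obtainable by applying Reduction `i` to a PCAF. -/
def ImageI (i : ℕ) : Set CAF := {F | ∃ G : PCAF, Red i G = F}

/-- `ImageTrans_i`: the class of CAFs obtainable by applying Reduction `i`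
to a PCAF with a transitive preference relation. -/
def ImageTransI (i : ℕ) : Set CAF :=
  {F | ∃ G : PCAF, Transitive G.pref ∧ Red i G = F}

/-- The class of well-formed CAFs. -/
def wfCAFs : Set CAF := {F | F.wf}

/-- The preference-claim-based variant `σ_p^i` of a semantics `σ`. -/
def prefSem (σ : CAF → Set ℕ → Prop) (i : ℕ) (F : PCAF) : Set (Set ℕ) :=
  CAF.claimSem σ (Red i F)

/-- `E_0(C)`: all arguments of `F` with a claim in `C`. -/
def E0 (F : PCAF) (C : Set ℕ) : Set ℕ := {a | a ∈ F.args ∧ F.claim a ∈ C}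

/-- `E_1^i(C)`: the arguments of `E_0(C)` not attacked by `E_0(C)` in the
underlying AF of `F` (this set does not depend on `i`). -/
def E1 (F : PCAF) (C : Set ℕ) : Set ℕ :=
  E0 F C \ {b | ∃ a ∈ E0 F C, (a, b) ∈ F.att}

/-- The sequence `E_k^i(C)`. -/
def Ek (F : PCAF) (i : ℕ) (C : Set ℕ) : ℕ → Set ℕ
  | 0 => E0 F C
  | 1 => E1 F C
  | (k + 2) => {x | x ∈ Ek F i C (k + 1) ∧ (Red i F).defends (Ek F i C (k + 1)) x}

/-- `E_*^i(C)`: the fixed point of the sequence `E_k^i(C)` (reached after at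
most `|A|` steps, since the sequence is ⊆-decreasing from index 1 on). -/
def Estar (F : PCAF) (i : ℕ) (C : Set ℕ) : Set ℕ := Ek F i C (F.args.card + 2)

/-! ### Auxiliary material for `stmt_1` -/

private lemma CAF.ext' {F G : CAF} (h1 : F.args = G.args) (h2 : F.att = G.att)
    (h3 : F.claim = G.claim) : F = G := by
  cases F; cases G; cases h1; cases h2; cases h3; rfl

private lemma redAtt1 (G : PCAF) :
    redAtt 1 G = {p | p ∈ G.att ∧ ¬ G.pref p.2 p.1} := rfl

private lemma redAtt2 (G : PCAF) :
    redAtt 2 G = {p | (p ∈ G.att ∧ ¬ G.pref p.2 p.1) ∨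
      ((p.2, p.1) ∈ G.att ∧ p ∉ G.att ∧ G.pref p.1 p.2)} := rfl

private lemma redAtt3 (G : PCAF) :
    redAtt 3 G = {p | (p ∈ G.att ∧ ¬ G.pref p.2 p.1) ∨
      (p ∈ G.att ∧ (p.2, p.1) ∉ G.att)} := rfl

private lemma redAtt4 (G : PCAF) :
    redAtt 4 G = {p | (p ∈ G.att ∧ ¬ G.pref p.2 p.1) ∨
      ((p.2, p.1) ∈ G.att ∧ p ∉ G.att ∧ G.pref p.1 p.2) ∨
      (p ∈ G.att ∧ (p.2, p.1) ∉ G.att)} := rfl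

/-- Witness CAF in `Image_1` but not in `Image_2`, `Image_3`, `Image_4`. -/
private def W1 : CAF where
  args := {0, 1}
  att := {((0 : ℕ), (0 : ℕ))}
  claim := fun _ => 0
  att_dom := by rintro p rfl; simp

/-- Witness CAF in `Image_2` but not in `Image_1`, `Image_3`, `Image_4`. -/
private def W2 : CAF where
  args := {0, 1}
  att := {((0 : ℕ), (0 : ℕ)), ((0 : ℕ), (1 : ℕ))}
  claim := fun _ => 0
  att_dom := by rintro p (rfl | rfl) <;> simp

/-- Witness CAF in `Image_4` but not in `Image_1`, `Image_2`, `Image_3`. -/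
private def W4 : CAF where
  args := {0, 1}
  att := {((0 : ℕ), (0 : ℕ)), ((0 : ℕ), (1 : ℕ)), ((1 : ℕ), (0 : ℕ))}
  claim := fun _ => 0
  att_dom := by rintro p (rfl | rfl | rfl) <;> simp

/-- A PCAF whose reductions produce `W1`, `W2`, `W4`. -/
private def G0 : PCAF where
  args := {0, 1}
  att := {((0 : ℕ), (0 : ℕ)), ((1 : ℕ), (0 : ℕ))}
  claim := fun _ => 0
  att_dom := by rintro p (rfl | rfl) <;> simp
  pref := fun a b => a = 0 ∧ b = 1
  pref_dom := by rintro a b ⟨rfl, rfl⟩; simp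
  pref_asymm := by rintro a b ⟨rfl, rfl⟩ ⟨h, _⟩; omega
  isWf := by
    intro a ha b hb _ c
    simp only [Finset.mem_insert, Finset.mem_singleton] at ha hb
    rcases ha with rfl | rfl <;> rcases hb with rfl | rfl <;>
      simp [Set.mem_insert_iff, Prod.ext_iff]

private lemma W1_mem : W1 ∈ ImageI 1 := by
  refine ⟨G0, CAF.ext' rfl ?_ rfl⟩
  show redAtt 1 G0 = W1.att
  rw [redAtt1]; ext ⟨a, b⟩
  simp only [Set.mem_setOf_eq, G0, W1, Set.mem_insert_iff,
    Set.mem_singleton_iff, Prod.ext_iff, Prod.mk.injEq]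
  omega

private lemma W2_mem : W2 ∈ ImageI 2 := by
  refine ⟨G0, CAF.ext' rfl ?_ rfl⟩
  show redAtt 2 G0 = W2.att
  rw [redAtt2]; ext ⟨a, b⟩
  simp only [Set.mem_setOf_eq, G0, W2, Set.mem_insert_iff,
    Set.mem_singleton_iff, Prod.ext_iff, Prod.mk.injEq]
  omega

private lemma W4_mem : W4 ∈ ImageI 4 := by
  refine ⟨G0, CAF.ext' rfl ?_ rfl⟩
  show redAtt 4 G0 = W4.att
  rw [redAtt4]; ext ⟨a, b⟩
  simp only [Set.mem_setOf_eq, G0, W4, Set.mem_insert_iff,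
    Set.mem_singleton_iff, Prod.ext_iff, Prod.mk.injEq]
  omega

/-- Common preparation for the non-membership proofs. -/
private lemma key_facts {j : ℕ} {W : CAF} (G : PCAF) (hG : Red j G = W)
    (hargs : W.args = {0, 1}) (hclaim : W.claim = fun _ => 0) :
    (∀ c, ((0, c) ∈ G.att ↔ (1, c) ∈ G.att)) ∧
    (¬ G.pref 0 0) ∧ (¬ G.pref 1 1) ∧ (G.pref 0 1 → ¬ G.pref 1 0) ∧
    (∀ p, p ∈ redAtt j G ↔ p ∈ W.att) := by
  have ha : G.args = ({0, 1} : Finset ℕ) := (congrArg CAF.args hG).trans hargs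
  have hc : G.claim = fun _ => 0 := (congrArg CAF.claim hG).trans hclaim
  have h0 : (0 : ℕ) ∈ G.args := by rw [ha]; simp
  have h1 : (1 : ℕ) ∈ G.args := by rw [ha]; simp
  refine ⟨G.isWf 0 h0 1 h1 (by rw [hc]), fun h => G.pref_asymm _ _ h h,
    fun h => G.pref_asymm _ _ h h, G.pref_asymm 0 1,
    fun p => Set.ext_iff.mp (congrArg CAF.att hG) p⟩

private lemma W1_not2 : W1 ∉ ImageI 2 := by
  rintro ⟨G, hG⟩
  obtain ⟨hwf, hp0, hp1, has, he⟩ := key_facts G hG rfl rfl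
  have e00 := he (0, 0); have e01 := he (0, 1)
  have e10 := he (1, 0); have e11 := he (1, 1)
  simp only [redAtt2, Set.mem_setOf_eq, W1, Set.mem_insert_iff,
    Set.mem_singleton_iff, Prod.mk.injEq, Nat.reduceEqDiff, true_and, and_true,
    and_false, false_and, or_false, false_or, or_true, true_or,
    iff_true, iff_false, not_or] at e00 e01 e10 e11
  have hw0 := hwf 0; have hw1 := hwf 1
  clear he hG hwf
  tauto

private lemma W1_not3 : W1 ∉ ImageI 3 := by
  rintro ⟨G, hG⟩
  obtain ⟨hwf, hp0, hp1, has, he⟩ := key_facts G hG rfl rfl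
  have e00 := he (0, 0); have e01 := he (0, 1)
  have e10 := he (1, 0); have e11 := he (1, 1)
  simp only [redAtt3, Set.mem_setOf_eq, W1, Set.mem_insert_iff,
    Set.mem_singleton_iff, Prod.mk.injEq, Nat.reduceEqDiff, true_and, and_true,
    and_false, false_and, or_false, false_or, or_true, true_or,
    iff_true, iff_false, not_or] at e00 e01 e10 e11
  have hw0 := hwf 0; have hw1 := hwf 1
  clear he hG hwf
  tauto

private lemma W1_not4 : W1 ∉ ImageI 4 := by
  rintro ⟨G, hG⟩
  obtain ⟨hwf, hp0, hp1, has, he⟩ := key_facts G hG rfl rfl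
  have e00 := he (0, 0); have e01 := he (0, 1)
  have e10 := he (1, 0); have e11 := he (1, 1)
  simp only [redAtt4, Set.mem_setOf_eq, W1, Set.mem_insert_iff,
    Set.mem_singleton_iff, Prod.mk.injEq, Nat.reduceEqDiff, true_and, and_true,
    and_false, false_and, or_false, false_or, or_true, true_or,
    iff_true, iff_false, not_or] at e00 e01 e10 e11
  have ha00 : (0, 0) ∈ G.att := by
    rcases e00 with ⟨h, -⟩ | ⟨h, -⟩ | ⟨h, -⟩ <;> exact h
  have ha10 := (hwf 0).mp ha00
  have hp01 : G.pref 0 1 := by by_contra h; exact e10.1 ⟨ha10, h⟩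
  have ha01 : (0, 1) ∈ G.att := by by_contra h; exact e10.2.2 ⟨ha10, h⟩
  exact e11.1 ⟨(hwf 1).mp ha01, hp1⟩

private lemma W2_not1 : W2 ∉ ImageI 1 := by
  rintro ⟨G, hG⟩
  obtain ⟨hwf, hp0, hp1, has, he⟩ := key_facts G hG rfl rfl
  have e00 := he (0, 0); have e01 := he (0, 1)
  have e10 := he (1, 0); have e11 := he (1, 1)
  simp only [redAtt1, Set.mem_setOf_eq, W2, Set.mem_insert_iff,
    Set.mem_singleton_iff, Prod.mk.injEq, Nat.reduceEqDiff, true_and, and_true,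
    and_false, false_and, or_false, false_or, or_true, true_or,
    iff_true, iff_false, not_or] at e00 e01 e10 e11
  have hw0 := hwf 0; have hw1 := hwf 1
  clear he hG hwf
  tauto

private lemma W2_not3 : W2 ∉ ImageI 3 := by
  rintro ⟨G, hG⟩
  obtain ⟨hwf, hp0, hp1, has, he⟩ := key_facts G hG rfl rfl
  have e00 := he (0, 0); have e01 := he (0, 1)
  have e10 := he (1, 0); have e11 := he (1, 1)
  simp only [redAtt3, Set.mem_setOf_eq, W2, Set.mem_insert_iff,
    Set.mem_singleton_iff, Prod.mk.injEq, Nat.reduceEqDiff, true_and, and_true,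
    and_false, false_and, or_false, false_or, or_true, true_or,
    iff_true, iff_false, not_or] at e00 e01 e10 e11
  have hw0 := hwf 0; have hw1 := hwf 1
  clear he hG hwf
  tauto

private lemma W2_not4 : W2 ∉ ImageI 4 := by
  rintro ⟨G, hG⟩
  obtain ⟨hwf, hp0, hp1, has, he⟩ := key_facts G hG rfl rfl
  have e00 := he (0, 0); have e01 := he (0, 1)
  have e10 := he (1, 0); have e11 := he (1, 1)
  simp only [redAtt4, Set.mem_setOf_eq, W2, Set.mem_insert_iff,
    Set.mem_singleton_iff, Prod.mk.injEq, Nat.reduceEqDiff, true_and, and_true,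
    and_false, false_and, or_false, false_or, or_true, true_or,
    iff_true, iff_false, not_or] at e00 e01 e10 e11
  have hw0 := hwf 0; have hw1 := hwf 1
  clear he hG hwf
  tauto

private lemma W4_not1 : W4 ∉ ImageI 1 := by
  rintro ⟨G, hG⟩
  obtain ⟨hwf, hp0, hp1, has, he⟩ := key_facts G hG rfl rfl
  have e00 := he (0, 0); have e01 := he (0, 1)
  have e10 := he (1, 0); have e11 := he (1, 1)
  simp only [redAtt1, Set.mem_setOf_eq, W4, Set.mem_insert_iff,
    Set.mem_singleton_iff, Prod.mk.injEq, Nat.reduceEqDiff, true_and, and_true,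
    and_false, false_and, or_false, false_or, or_true, true_or,
    iff_true, iff_false, not_or] at e00 e01 e10 e11
  have hw0 := hwf 0; have hw1 := hwf 1
  clear he hG hwf
  tauto

private lemma W4_not2 : W4 ∉ ImageI 2 := by
  rintro ⟨G, hG⟩
  obtain ⟨hwf, hp0, hp1, has, he⟩ := key_facts G hG rfl rfl
  have e00 := he (0, 0); have e01 := he (0, 1)
  have e10 := he (1, 0); have e11 := he (1, 1)
  simp only [redAtt2, Set.mem_setOf_eq, W4, Set.mem_insert_iff,
    Set.mem_singleton_iff, Prod.mk.injEq, Nat.reduceEqDiff, true_and, and_true,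
    and_false, false_and, or_false, false_or, or_true, true_or,
    iff_true, iff_false, not_or] at e00 e01 e10 e11
  have hw0 := hwf 0; have hw1 := hwf 1
  clear he hG hwf
  tauto

private lemma W4_not3 : W4 ∉ ImageI 3 := by
  rintro ⟨G, hG⟩
  obtain ⟨hwf, hp0, hp1, has, he⟩ := key_facts G hG rfl rfl
  have e00 := he (0, 0); have e01 := he (0, 1)
  have e10 := he (1, 0); have e11 := he (1, 1)
  simp only [redAtt3, Set.mem_setOf_eq, W4, Set.mem_insert_iff,
    Set.mem_singleton_iff, Prod.mk.injEq, Nat.reduceEqDiff, true_and, and_true,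
    and_false, false_and, or_false, false_or, or_true, true_or,
    iff_true, iff_false, not_or] at e00 e01 e10 e11
  have hw0 := hwf 0; have hw1 := hwf 1
  clear he hG hwf
  tauto


/-- For all `i ∈ {1,2,4}` and all `j ∈ {1,2,3,4}` with `i ≠ j`,
`Image_i` is not a subclass of `Image_j`. -/
theorem stmt_1 :
    ∀ i ∈ ({1, 2, 4} : Set ℕ), ∀ j ∈ ({1, 2, 3, 4} : Set ℕ), i ≠ j →
      ¬ ImageI i ⊆ ImageI j := by
  intro i hi j hj hne hsub
  simp only [Set.mem_insert_iff, Set.mem_singleton_iff] at hi hj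
  rcases hi with rfl | rfl | rfl <;> rcases hj with rfl | rfl | rfl | rfl
  · exact hne rfl
  · exact W1_not2 (hsub W1_mem)
  · exact W1_not3 (hsub W1_mem)
  · exact W1_not4 (hsub W1_mem)
  · exact W2_not1 (hsub W2_mem)
  · exact hne rfl
  · exact W2_not3 (hsub W2_mem)
  · exact W2_not4 (hsub W2_mem)
  · exact W4_not1 (hsub W4_mem)
  · exact W4_not2 (hsub W4_mem)
  · exact W4_not3 (hsub W4_mem)
  · exact hne rfl
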